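/- Symmetry and positive definiteness of the Brownian-bridge regularized Green's function: for v > 0 and c > 0, the kernel G(t,s) = sinh(c((t∧s)-a)) sinh(c(b-(t∨s)))/sinh(c(b-a)) on [a,b]² is symmetric and positive semidefinite, i.e., ∑_{n,m} z_n z_m G(t_n, t_m) ≥ 0 for all finite families of points t_n ∈ [a,b] and reals z_n. -/

import Mathlib

open MeasureTheory Real

/-- Positive semidefiniteness of the `min` kernel on nonnegative reals. -/
lemma minKernel_posSemidef (N : ℕ) (x : Fin N → ℝ) (hx : ∀ n, 0 ≤ x n)
    (w : Fin N → ℝ) :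
    0 ≤ ∑ n : Fin N, ∑ m : Fin N, w n * w m * min (x n) (x m) := by
  set f : Fin N → ℝ → ℝ := fun n => (Set.Ioo (0:ℝ) (x n)).indicator (fun _ => w n) with hf
  have hprod : ∀ n m, (fun u => f n u * f m u)
      = (Set.Ioo (0:ℝ) (min (x n) (x m))).indicator (fun _ => w n * w m) := by
    intro n m
    funext u
    rw [hf]
    simp only [← Set.inter_indicator_mul, Set.Ioo_inter_Ioo, max_self]
  have hint : ∀ n m, Integrable (fun u => f n u * f m u) (volume : Measure ℝ) := by
    intro n m
    rw [hprod]
    rw [integrable_indicator_iff measurableSet_Ioo]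
    exact integrableOn_const (by simp [Real.volume_Ioo])
  have hval : ∀ n m, ∫ u, f n u * f m u = w n * w m * min (x n) (x m) := by
    intro n m
    rw [hprod, integral_indicator_const _ measurableSet_Ioo]
    rw [measureReal_def, Real.volume_Ioo]
    rw [ENNReal.toReal_ofReal (by simp [le_min_iff, hx n, hx m])]
    simp [mul_comm]
  have key : (0:ℝ) ≤ ∫ u, (∑ n, f n u)^2 := integral_nonneg (fun u => sq_nonneg _)
  calc (0:ℝ) ≤ ∫ u, (∑ n, f n u)^2 := key
    _ = ∫ u, ∑ n, ∑ m, f n u * f m u := by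
        congr 1; funext u
        rw [sq, Finset.sum_mul_sum]
    _ = ∑ n, ∑ m, ∫ u, f n u * f m u := by
        rw [integral_finset_sum _ (fun n _ => integrable_finset_sum _ (fun m _ => hint n m))]
        exact Finset.sum_congr rfl fun n _ =>
          integral_finset_sum _ (fun m _ => hint n m)
    _ = ∑ n, ∑ m, w n * w m * min (x n) (x m) := by
        exact Finset.sum_congr rfl fun n _ => Finset.sum_congr rfl fun m _ => hval n m

lemma sinh_mul_sinh' (A B : ℝ) :
    Real.sinh A * Real.sinh B = (Real.cosh (A + B) - Real.cosh (A - B)) / 2 := by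
  rw [Real.cosh_add, Real.cosh_sub]; ring

/-- cross inequality -/
lemma cross_ineq (a b c t s : ℝ) (hc : 0 < c) (hat : a ≤ t) (hts : t ≤ s) (hsb : s ≤ b) :
    Real.sinh (c * (t - a)) * Real.sinh (c * (b - s))
      ≤ Real.sinh (c * (s - a)) * Real.sinh (c * (b - t)) := by
  rw [sinh_mul_sinh', sinh_mul_sinh']
  have h1 : c * (t - a) - c * (b - s) = c * (s - a) - c * (b - t) := by ring
  rw [h1]
  have h2 : Real.cosh (c * (t - a) + c * (b - s)) ≤ Real.cosh (c * (s - a) + c * (b - t)) := by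
    rw [Real.cosh_le_cosh]
    rw [abs_le]
    have habs : 0 ≤ c * (s - a) + c * (b - t) := by nlinarith
    rw [abs_of_nonneg habs]
    constructor <;> nlinarith
  linarith

/-- Symmetry and positive semidefiniteness of the Brownian-bridge
regularized Green's kernel
`G(t,s) = sinh(c((t∧s)-a)) sinh(c(b-(t∨s)))/sinh(c(b-a))`. -/
theorem regularized_bridge_kernel_symm_posSemidef
    (a b c : ℝ) (hab : a < b) (hc : 0 < c)
    (G : ℝ → ℝ → ℝ)
    (hG : ∀ t s, G t s = Real.sinh (c * (min t s - a)) *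
        Real.sinh (c * (b - max t s)) / Real.sinh (c * (b - a))) :
    (∀ t s, G t s = G s t) ∧
    (∀ (N : ℕ) (t : Fin N → ℝ), (∀ n, t n ∈ Set.Icc a b) → ∀ z : Fin N → ℝ,
      0 ≤ ∑ n : Fin N, ∑ m : Fin N, z n * z m * G (t n) (t m)) := by
  have hS : 0 < Real.sinh (c * (b - a)) := Real.sinh_pos_iff.mpr (by nlinarith)
  constructor
  · intro t s
    rw [hG, hG, min_comm, max_comm]
  · intro N t ht z
    set X : ℝ → ℝ := fun u => Real.sinh (c * (u - a)) / Real.sinh (c * (b - u)) with hX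
    have hXnn : ∀ u ∈ Set.Icc a b, 0 ≤ X u := by
      intro u hu
      exact div_nonneg (Real.sinh_nonneg_iff.mpr (by nlinarith [hu.1, hu.2]))
        (Real.sinh_nonneg_iff.mpr (by nlinarith [hu.1, hu.2]))
    -- key pointwise identity
    have hkey : ∀ u ∈ Set.Icc a b, ∀ v ∈ Set.Icc a b,
        Real.sinh (c * (b - u)) * Real.sinh (c * (b - v)) * min (X u) (X v)
          = Real.sinh (c * (min u v - a)) * Real.sinh (c * (b - max u v)) := by
      have main : ∀ u v, a ≤ u → u ≤ v → v ≤ b →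
          Real.sinh (c * (b - u)) * Real.sinh (c * (b - v)) * min (X u) (X v)
            = Real.sinh (c * (u - a)) * Real.sinh (c * (b - v)) := by
        intro u v hau huv hvb
        rcases eq_or_lt_of_le hvb with h | h
        · subst h
          simp [X]
        · have hgv : 0 < Real.sinh (c * (b - v)) := Real.sinh_pos_iff.mpr (by nlinarith)
          have hgu : 0 < Real.sinh (c * (b - u)) := Real.sinh_pos_iff.mpr (by nlinarith)
          have hmin : min (X u) (X v) = X u := by
            apply min_eq_left
            rw [hX, div_le_div_iff₀ hgu hgv]
            exact cross_ineq a b c u v hc hau huv hvb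
          rw [hmin, hX]
          field_simp
      intro u hu v hv
      rcases le_total u v with h | h
      · rw [min_eq_left h, max_eq_right h]
        exact main u v hu.1 h hv.2
      · rw [min_eq_right h, max_eq_left h, min_comm, mul_comm (Real.sinh (c * (b - u)))]
        exact main v u hv.1 h hu.2
    have hterm : ∀ n m, z n * z m * G (t n) (t m)
        = (z n * Real.sinh (c * (b - t n))) * (z m * Real.sinh (c * (b - t m)))
            * min (X (t n)) (X (t m)) / Real.sinh (c * (b - a)) := by
      intro n m
      rw [hG, ← hkey (t n) (ht n) (t m) (ht m)]
      ring
    calc (0:ℝ) ≤ (∑ n : Fin N, ∑ m : Fin N,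
          (z n * Real.sinh (c * (b - t n))) * (z m * Real.sinh (c * (b - t m)))
            * min (X (t n)) (X (t m))) / Real.sinh (c * (b - a)) := by
          apply div_nonneg _ hS.le
          exact minKernel_posSemidef N (fun n => X (t n)) (fun n => hXnn _ (ht n))
            (fun n => z n * Real.sinh (c * (b - t n)))
      _ = ∑ n : Fin N, ∑ m : Fin N, z n * z m * G (t n) (t m) := by
          rw [Finset.sum_div]
          refine Finset.sum_congr rfl fun n _ => ?_
          rw [Finset.sum_div]
          exact Finset.sum_congr rfl fun m _ => (hterm n m).symm
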